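/- Let I ⊂ S = K[x_1,…,x_n] be a squarefree monomial ideal and x a variable of S. Then β_i(I) ≥ β_i(I : x) for all i, where I : x is the colon ideal. -/

import Mathlib

open MvPolynomial

/-- A minimal free resolution (with Betti numbers `b i`) of the module `M` over `S`,
minimality being taken with respect to the (maximal) ideal `mx`. -/
structure MinFreeRes (S : Type*) [CommRing S] (mx : Ideal S)
    (M : Type*) [AddCommGroup M] [Module S M] (b : ℕ → ℕ) where
  d : ∀ i : ℕ, (Fin (b (i + 1)) → S) →ₗ[S] (Fin (b i) → S)
  aug : (Fin (b 0) → S) →ₗ[S] M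
  aug_surj : Function.Surjective aug
  exact_aug : LinearMap.ker aug = LinearMap.range (d 0)
  exact : ∀ i, LinearMap.ker (d i) = LinearMap.range (d (i + 1))
  minimal : ∀ i, LinearMap.range (d i) ≤ mx • (⊤ : Submodule S (Fin (b i) → S))

/-- The irrelevant maximal ideal `(x_v : v ∈ V)` of the polynomial ring. -/
noncomputable def maxIdeal (K : Type*) [Field K] (V : Type*) : Ideal (MvPolynomial V K) :=
  Ideal.span (Set.range X)

/-- `I` is a monomial ideal. -/
def IsMonomialIdeal {K V : Type*} [Field K] (I : Ideal (MvPolynomial V K)) : Prop :=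
  ∃ A : Set (V →₀ ℕ), I = Ideal.span ((fun s => monomial s (1 : K)) '' A)

/-- `I` is a squarefree monomial ideal. -/
def IsSqfreeMonomialIdeal {K V : Type*} [Field K] (I : Ideal (MvPolynomial V K)) : Prop :=
  ∃ A : Set (V →₀ ℕ), (∀ s ∈ A, ∀ v, s v ≤ 1) ∧
    I = Ideal.span ((fun s => monomial s (1 : K)) '' A)

/-- The edge ideal of a finite simple graph. -/
noncomputable def edgeIdeal (K : Type*) [Field K] {V : Type*} (G : SimpleGraph V) :
    Ideal (MvPolynomial V K) :=
  Ideal.span {p | ∃ u v, G.Adj u v ∧ p = X u * X v}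

/-- The edge ideal of the induced subgraph `G_W`, in the same polynomial ring. -/
noncomputable def edgeIdealOn (K : Type*) [Field K] {V : Type*} (G : SimpleGraph V) (W : Set V) :
    Ideal (MvPolynomial V K) :=
  Ideal.span {p | ∃ u v, G.Adj u v ∧ u ∈ W ∧ v ∈ W ∧ p = X u * X v}

/-- A cycle `w` in `G` has a chord: an edge of `G` joining two vertices of the cycle
which is not an edge of the cycle. -/
def HasChord {V : Type*} (G : SimpleGraph V) {v : V} (w : G.Walk v v) : Prop :=
  ∃ a b, a ∈ w.support ∧ b ∈ w.support ∧ G.Adj a b ∧ s(a, b) ∉ w.edges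

/-- A graph is chordal if every cycle of length `> 3` has a chord. -/
def IsChordal {V : Type*} (G : SimpleGraph V) : Prop :=
  ∀ (v : V) (w : G.Walk v v), w.IsCycle → 3 < w.length → HasChord G w

/-- A chain of `ℓ + 1` edges of `G` from `e` to `e'`, consecutive ones intersecting. -/
def IsEdgeChain {V : Type*} (G : SimpleGraph V) (e e' : Sym2 V) (ℓ : ℕ) : Prop :=
  ∃ c : Fin (ℓ + 1) → Sym2 V, c 0 = e ∧ c (Fin.last ℓ) = e' ∧
    (∀ i, c i ∈ G.edgeSet) ∧ ∀ i : Fin ℓ, ∃ x : V, x ∈ c i.castSucc ∧ x ∈ c i.succ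

/-- The distance between two edges of `G` (`⊤` if there is no chain joining them). -/
noncomputable def edgeDist {V : Type*} (G : SimpleGraph V) (e e' : Sym2 V) : ℕ∞ :=
  sInf ((fun ℓ : ℕ => (ℓ : ℕ∞)) '' {ℓ | IsEdgeChain G e e' ℓ})

/-- The subgraph `G'` of `G` whose edges are those at distance `≥ 3` from `e`. -/
def farSubgraph {V : Type*} (G : SimpleGraph V) (e : Sym2 V) : SimpleGraph V where
  Adj a b := G.Adj a b ∧ 3 ≤ edgeDist G e s(a, b)
  symm := ⟨by
    intro a b h
    refine ⟨h.1.symm, ?_⟩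
    rw [Sym2.eq_swap]
    exact h.2⟩
  loopless := ⟨fun a h => G.loopless.irrefl a h.1⟩

/-- The transpose (dual) of a map of finite free modules. -/
noncomputable def dualMap {S : Type*} [CommRing S] {a b : ℕ}
    (f : (Fin a → S) →ₗ[S] (Fin b → S)) : (Fin b → S) →ₗ[S] (Fin a → S) :=
  Matrix.toLin' (Matrix.transpose (LinearMap.toMatrix' f))

/-- `S/I` is Gorenstein: either `I = 0` (and `S` is a polynomial ring, hence Gorenstein),
or the dual of a minimal free resolution of `S/I` of length `p` is exact except at the
last spot, where its cokernel (the canonical module `Ext^p_S(S/I, S)`) is isomorphic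
to `S/I`. -/
def IsGorensteinQuot {S : Type*} [CommRing S] (mx : Ideal S) (I : Ideal S) : Prop :=
  I = ⊥ ∨
  ∃ (b : ℕ → ℕ) (q : ℕ) (F : MinFreeRes S mx (S ⧸ I) b),
    (∀ i, q + 1 < i → b i = 0) ∧
    LinearMap.ker (dualMap (F.d 0)) = ⊥ ∧
    (∀ i, i + 1 ≤ q →
      LinearMap.ker (dualMap (F.d (i + 1))) = LinearMap.range (dualMap (F.d i))) ∧
    Nonempty (((Fin (b (q + 1)) → S) ⧸ LinearMap.range (dualMap (F.d q))) ≃ₗ[S] (S ⧸ I))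

noncomputable section StmtAux

namespace Stmt8Aux

variable {K : Type*} [Field K] {N : ℕ}

/-- substitution `X j ↦ 1`. -/
def sig (K : Type*) [Field K] {N : ℕ} (j : Fin N) :
    MvPolynomial (Fin N) K →ₐ[K] MvPolynomial (Fin N) K :=
  aeval (fun v => if v = j then 1 else X v)

variable (j : Fin N)

@[simp] lemma sig_X_self : sig K j (X j) = 1 := by simp [sig]

lemma sig_X_ne {v : Fin N} (h : v ≠ j) : sig K j (X v) = X v := by simp [sig, h]

lemma sig_monomial (m : Fin N →₀ ℕ) (a : K) :
    sig K j (monomial m a) = monomial (m.erase j) a := by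
  classical
  rw [sig, aeval_monomial, monomial_eq, algebraMap_eq]
  congr 1
  by_cases hj : j ∈ m.support
  · rw [Finsupp.prod, Finsupp.prod, Finsupp.support_erase,
      ← Finset.mul_prod_erase _ _ hj, if_pos rfl, one_pow, one_mul]
    refine Finset.prod_congr rfl fun v hv => ?_
    rw [if_neg (Finset.mem_erase.mp hv).1, Finsupp.erase_ne (Finset.mem_erase.mp hv).1]
  · rw [Finsupp.erase_of_notMem_support hj, Finsupp.prod, Finsupp.prod]
    refine Finset.prod_congr rfl fun v hv => ?_
    have hvj : v ≠ j := by rintro rfl; exact hj hv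
    rw [if_neg hvj]

/-- `p` does not involve the variable `j`. -/
def NoX (j : Fin N) (p : MvPolynomial (Fin N) K) : Prop :=
  ∀ m ∈ p.support, m j = 0

lemma sig_as_sum (p : MvPolynomial (Fin N) K) :
    sig K j p = ∑ m ∈ p.support, monomial (m.erase j) (coeff m p) := by
  conv_lhs => rw [p.as_sum]
  rw [map_sum]
  exact Finset.sum_congr rfl fun m _ => sig_monomial j m _

lemma noX_sig (p : MvPolynomial (Fin N) K) : NoX j (sig K j p) := by
  classical
  intro m hm
  rw [mem_support_iff] at hm
  by_contra h0
  apply hm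
  rw [sig_as_sum, coeff_sum]
  refine Finset.sum_eq_zero fun m' _ => ?_
  rw [coeff_monomial, if_neg]
  intro h
  exact h0 (h ▸ Finsupp.erase_same)

lemma sig_eq_self_of_noX {p : MvPolynomial (Fin N) K} (h : NoX j p) : sig K j p = p := by
  classical
  rw [sig_as_sum]
  conv_rhs => rw [p.as_sum]
  refine Finset.sum_congr rfl fun m hm => ?_
  rw [Finsupp.erase_of_notMem_support (fun hs => by
    exact absurd (h m hm) (Finsupp.mem_support_iff.mp hs))]

lemma sig_idem (p : MvPolynomial (Fin N) K) : sig K j (sig K j p) = sig K j p :=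
  sig_eq_self_of_noX j (noX_sig j p)

lemma sub_sig_mem (p : MvPolynomial (Fin N) K) :
    p - sig K j p ∈ Ideal.span {X j - 1} := by
  induction p using MvPolynomial.induction_on with
  | C a => simp [sig]
  | add p q hp hq =>
      have : p + q - sig K j (p + q) = (p - sig K j p) + (q - sig K j q) := by
        rw [map_add]; ring
      rw [this]; exact Ideal.add_mem _ hp hq
  | mul_X p v hp =>
      have : p * X v - sig K j (p * X v)
          = (p - sig K j p) * X v + sig K j p * (X v - sig K j (X v)) := by
        rw [map_mul]; ring
      rw [this]
      refine Ideal.add_mem _ (Ideal.mul_mem_right _ _ hp) ?_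
      by_cases hv : v = j
      · subst hv
        rw [sig_X_self]
        exact Ideal.mul_mem_left _ _ (Ideal.subset_span rfl)
      · rw [sig_X_ne j hv, sub_self, mul_zero]
        exact Ideal.zero_mem _

lemma mem_span_of_sig_eq_zero {p : MvPolynomial (Fin N) K} (h : sig K j p = 0) :
    p ∈ Ideal.span {X j - 1} := by
  have := sub_sig_mem j p
  rwa [h, sub_zero] at this


/-- The `x_j`-degree-`k` homogeneous component. -/
def ck (j : Fin N) (k : ℕ) (p : MvPolynomial (Fin N) K) : MvPolynomial (Fin N) K :=
  AddMonoidAlgebra.ofCoeff (Finsupp.filter (fun m => m j = k) (AddMonoidAlgebra.coeff p))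

lemma coeff_ck (k : ℕ) (p : MvPolynomial (Fin N) K) (m : Fin N →₀ ℕ) :
    coeff m (ck j k p) = if m j = k then coeff m p else 0 := by
  classical
  rw [ck, coeff, Finsupp.filter_apply]
  rfl

lemma ck_add (k : ℕ) (p q : MvPolynomial (Fin N) K) :
    ck j k (p + q) = ck j k p + ck j k q := by
  classical
  apply MvPolynomial.ext
  intro m
  simp only [coeff_ck, coeff_add]
  split <;> simp

lemma ck_sub (k : ℕ) (p q : MvPolynomial (Fin N) K) :
    ck j k (p - q) = ck j k p - ck j k q := by
  classical
  apply MvPolynomial.ext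
  intro m
  simp only [coeff_ck, coeff_sub]
  split <;> simp

lemma ck_zero (k : ℕ) : ck j k (0 : MvPolynomial (Fin N) K) = 0 := by
  classical
  apply MvPolynomial.ext
  intro m
  rw [coeff_ck]
  split <;> rfl

lemma ck_sum {α : Type*} (k : ℕ) (s : Finset α) (f : α → MvPolynomial (Fin N) K) :
    ck j k (∑ a ∈ s, f a) = ∑ a ∈ s, ck j k (f a) := by
  classical
  induction s using Finset.induction_on with
  | empty =>
      apply MvPolynomial.ext; intro m; simp [coeff_ck]
  | insert _ _ h ih => rw [Finset.sum_insert h, Finset.sum_insert h, ck_add, ih]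

lemma support_ck (k : ℕ) (p : MvPolynomial (Fin N) K) :
    (ck j k p).support ⊆ p.support := by
  intro m hm
  rw [mem_support_iff] at *
  rw [coeff_ck] at hm
  intro h
  apply hm
  split <;> simp [h]

lemma mem_support_ck (k : ℕ) (p : MvPolynomial (Fin N) K) {m : Fin N →₀ ℕ}
    (hm : m ∈ (ck j k p).support) : m j = k := by
  rw [mem_support_iff, coeff_ck] at hm
  by_contra h
  rw [if_neg h] at hm
  exact hm rfl

lemma ck_monomial (k : ℕ) (m : Fin N →₀ ℕ) (a : K) :
    ck j k (monomial m a) = if m j = k then monomial m a else 0 := by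
  classical
  apply MvPolynomial.ext
  intro m'
  rw [coeff_ck, apply_ite (coeff m')]
  simp only [coeff_monomial, coeff_zero]
  by_cases h1 : m = m'
  · subst h1; rfl
  · simp [h1]

/-- decomposition of `p` into `x_j`-components. -/
lemma sum_ck (p : MvPolynomial (Fin N) K) {n : ℕ} (hn : ∀ m ∈ p.support, m j ≤ n) :
    p = ∑ k ∈ Finset.range (n + 1), ck j k p := by
  classical
  apply MvPolynomial.ext
  intro m
  rw [coeff_sum]
  simp only [coeff_ck]
  rw [Finset.sum_ite_eq (Finset.range (n+1)) (m j) (fun _ => coeff m p)]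
  by_cases hm : m ∈ p.support
  · rw [if_pos (Finset.mem_range.mpr (Nat.lt_succ_of_le (hn m hm)))]
  · rw [MvPolynomial.notMem_support_iff.mp hm]
    split <;> rfl

lemma ck_mul_noX (k : ℕ) {q : MvPolynomial (Fin N) K} (hq : NoX j q)
    (p : MvPolynomial (Fin N) K) : ck j k (q * p) = q * ck j k p := by
  classical
  -- reduce q to monomials with `m j = 0`
  have hmono : ∀ (m1 : Fin N →₀ ℕ) (a : K), m1 j = 0 →
      ck j k (monomial m1 a * p) = monomial m1 a * ck j k p := by
    intro m1 a hm1
    induction p using MvPolynomial.induction_on' with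
    | monomial m2 b =>
        rw [monomial_mul, ck_monomial, ck_monomial]
        have : (m1 + m2) j = m2 j := by simp [hm1]
        rw [this]
        split <;> simp [monomial_mul]
    | add p1 p2 h1 h2 =>
        rw [mul_add, ck_add, h1, h2, ck_add, mul_add]
  conv_lhs => rw [q.as_sum]
  conv_rhs => rw [q.as_sum]
  rw [Finset.sum_mul, ck_sum, Finset.sum_mul]
  refine Finset.sum_congr rfl fun m hm => ?_
  exact hmono m _ (hq m hm)

lemma ck_X_mul (k : ℕ) (p : MvPolynomial (Fin N) K) :
    ck j (k + 1) (X j * p) = X j * ck j k p := by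
  classical
  induction p using MvPolynomial.induction_on' with
  | monomial m b =>
      rw [X, monomial_mul, ck_monomial, ck_monomial]
      have : (Finsupp.single j (1:ℕ) + m) j = m j + 1 := by simp [Nat.add_comm]
      rw [this]
      by_cases h : m j = k
      · rw [if_pos (by omega), if_pos h, monomial_mul]
      · rw [if_neg (by omega), if_neg h, mul_zero]
  | add p1 p2 h1 h2 => rw [mul_add, ck_add, h1, h2, ck_add, mul_add]

lemma ck_zero_X_mul (p : MvPolynomial (Fin N) K) : ck j 0 (X j * p) = 0 := by
  classical
  induction p using MvPolynomial.induction_on' with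
  | monomial m b =>
      rw [X, monomial_mul, ck_monomial]
      have : (Finsupp.single j (1:ℕ) + m) j = m j + 1 := by simp [Nat.add_comm]
      rw [this, if_neg (by omega)]
  | add p1 p2 h1 h2 => rw [mul_add, ck_add, h1, h2, add_zero]

lemma eq_X_pow_mul_sig_of_deg {k : ℕ} {p : MvPolynomial (Fin N) K}
    (h : ∀ m ∈ p.support, m j = k) : p = X j ^ k * sig K j p := by
  classical
  conv_lhs => rw [p.as_sum]
  rw [sig_as_sum, Finset.mul_sum]
  refine Finset.sum_congr rfl fun m hm => ?_
  rw [X_pow_eq_monomial, monomial_mul, one_mul]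
  have hm' : Finsupp.single j k + Finsupp.erase j m = m := by
    rw [← h m hm]; exact Finsupp.single_add_erase j m
  rw [hm']

lemma ck_eq_X_pow_mul_sig (k : ℕ) (p : MvPolynomial (Fin N) K) :
    ck j k p = X j ^ k * sig K j (ck j k p) :=
  eq_X_pow_mul_sig_of_deg j (fun m hm => mem_support_ck j k p hm)

/-- the `x_j` degree. -/
def degx (j : Fin N) (p : MvPolynomial (Fin N) K) : ℕ :=
  p.support.sup (fun m => m j)

lemma le_degx {p : MvPolynomial (Fin N) K} {m : Fin N →₀ ℕ} (hm : m ∈ p.support) :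
    m j ≤ degx j p := Finset.le_sup (f := fun m => m j) hm

lemma ck_eq_zero_of_degx_lt {p : MvPolynomial (Fin N) K} {k : ℕ} (h : degx j p < k) :
    ck j k p = 0 := by
  classical
  apply MvPolynomial.ext
  intro m
  rw [coeff_ck]
  by_cases hm : m ∈ p.support
  · rw [if_neg (by have := le_degx j hm; omega)]; rfl
  · rw [MvPolynomial.notMem_support_iff.mp hm]
    split <;> rfl

variable (A : Set (Fin N →₀ ℕ))

/-- membership in a monomial ideal -/
lemma memI (p : MvPolynomial (Fin N) K) :
    p ∈ Ideal.span ((fun s => monomial s (1 : K)) '' A) ↔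
      ∀ m ∈ p.support, ∃ s ∈ A, s ≤ m :=
  mem_ideal_span_monomial_image

lemma ck_memI {p : MvPolynomial (Fin N) K} (k : ℕ)
    (hp : p ∈ Ideal.span ((fun s => monomial s (1 : K)) '' A)) :
    ck j k p ∈ Ideal.span ((fun s => monomial s (1 : K)) '' A) := by
  rw [memI] at *
  exact fun m hm => hp m (support_ck j k p hm)

lemma mem_support_X_mul {p : MvPolynomial (Fin N) K} {m : Fin N →₀ ℕ}
    (hm : m ∈ p.support) : Finsupp.single j 1 + m ∈ (X j * p).support := by
  rw [mem_support_iff] at *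
  rwa [coeff_X_mul]

lemma support_X_mul_sub {p : MvPolynomial (Fin N) K} {m : Fin N →₀ ℕ}
    (hm : m ∈ (X j * p).support) :
    m j ≠ 0 ∧ m - Finsupp.single j 1 ∈ p.support := by
  classical
  rw [mem_support_iff, coeff_X_mul'] at hm
  by_cases h : j ∈ m.support
  · rw [if_pos h] at hm
    exact ⟨Finsupp.mem_support_iff.mp h, mem_support_iff.mpr hm⟩
  · rw [if_neg h] at hm; exact absurd rfl hm

variable (hA1 : ∀ s ∈ A, ∀ v, s v ≤ 1)

include hA1 in
/-- squarefree saturation step -/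
lemma sat {q : MvPolynomial (Fin N) K}
    (h : X j * (X j * q) ∈ Ideal.span ((fun s => monomial s (1 : K)) '' A)) :
    X j * q ∈ Ideal.span ((fun s => monomial s (1 : K)) '' A) := by
  rw [memI] at *
  intro m hm
  obtain ⟨s, hs, hle⟩ := h _ (mem_support_X_mul j hm)
  refine ⟨s, hs, Finsupp.le_def.mpr fun v => ?_⟩
  have hv' := Finsupp.le_def.mp hle v
  by_cases hv : v = j
  · have h1 : s j ≤ 1 := hA1 s hs j
    have h2 : m j ≠ 0 := (support_X_mul_sub j hm).1
    have h3 : ((Finsupp.single j 1 + m) : Fin N →₀ ℕ) j = 1 + m j := by simp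
    rw [hv] at hv' ⊢
    omega
  · simpa [Finsupp.add_apply, Finsupp.single_apply, Ne.symm hv] using hv'

include hA1 in
/-- `X j - 1` is a nonzerodivisor mod a squarefree monomial ideal -/
lemma nzd {f : MvPolynomial (Fin N) K}
    (h : (X j - 1) * f ∈ Ideal.span ((fun s => monomial s (1 : K)) '' A)) :
    f ∈ Ideal.span ((fun s => monomial s (1 : K)) '' A) := by
  classical
  set I := Ideal.span ((fun s => monomial s (1 : K)) '' A) with hIdef
  set d := degx j f with hd
  -- components of the product are in I
  have hcomp : ∀ k, ck j k ((X j - 1) * f) ∈ I := fun k => ck_memI j A k h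
  have hsplit : ∀ k, ck j (k+1) ((X j - 1) * f) = X j * ck j k f - ck j (k+1) f := by
    intro k
    rw [sub_mul, one_mul, ck_sub, ck_X_mul]
  have hzero : ck j 0 ((X j - 1) * f) = - ck j 0 f := by
    rw [sub_mul, one_mul, ck_sub, ck_zero_X_mul, zero_sub]
  -- downward induction: X j * ck j k f ∈ I for all k
  have htop : ∀ k, d < k → ck j k f = 0 := fun k hk => ck_eq_zero_of_degx_lt j hk
  have hQ : ∀ t, X j * ck j (d - t) f ∈ I := by
    intro t
    induction t with
    | zero =>
        have := hcomp (d + 1)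
        rw [hsplit d, htop (d+1) (by omega), sub_zero] at this
        simpa using this
    | succ t ih =>
        by_cases ht : d ≤ t
        · have : d - (t+1) = d - t := by omega
          rw [this]; exact ih
        · have hk : d - t = (d - (t+1)) + 1 := by omega
          set k := d - (t+1) with hkdef
          rw [hk] at ih
          -- ck (k+1) (prod) = X j * ck k f - ck (k+1) f ∈ I
          have h1 := hcomp (k+1)
          rw [hsplit k] at h1
          -- multiply by X j : X j * (X j * ck k f) - X j * ck (k+1) f ∈ I
          have h2 : X j * (X j * ck j k f) ∈ I := by
            have h3 : X j * (X j * ck j k f) - X j * ck j (k+1) f ∈ I := by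
              have := Ideal.mul_mem_left I (X j) h1
              rwa [mul_sub] at this
            have := Ideal.add_mem I h3 ih
            simpa using this
          exact sat j A hA1 h2
  have hQ' : ∀ k, X j * ck j k f ∈ I := by
    intro k
    by_cases hk : k ≤ d
    · have := hQ (d - k)
      rwa [Nat.sub_sub_self hk] at this
    · rw [htop k (by omega), mul_zero]; exact Ideal.zero_mem _
  -- upward: all components of f are in I
  have hCk : ∀ k, ck j k f ∈ I := by
    intro k
    cases k with
    | zero =>
        have := hcomp 0
        rw [hzero] at this
        simpa using (Ideal.neg_mem_iff I).mp this
    | succ k =>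
        have h1 := hcomp (k+1)
        rw [hsplit k] at h1
        have := Ideal.sub_mem I (hQ' k) h1
        simpa using this
  rw [sum_ck j f (fun m hm => le_degx j hm)]
  exact Ideal.sum_mem I fun k _ => hCk k

lemma mem_colon_X (I : Ideal (MvPolynomial (Fin N) K)) (f : MvPolynomial (Fin N) K) :
    f ∈ Submodule.colon I ((Ideal.span {X j} : Ideal (MvPolynomial (Fin N) K)) : Set (MvPolynomial (Fin N) K)) ↔ X j * f ∈ I := by
  rw [Ideal.mem_colon_span_singleton, mul_comm]

include hA1 in
lemma span_erase_eq_colon :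
    Ideal.span ((fun s => monomial s (1 : K)) '' ((fun s => Finsupp.erase j s) '' A))
      = Submodule.colon (Ideal.span ((fun s => monomial s (1 : K)) '' A))
          ((Ideal.span {X j} : Ideal (MvPolynomial (Fin N) K)) : Set (MvPolynomial (Fin N) K)) := by
  classical
  apply le_antisymm
  · rw [Ideal.span_le]
    rintro p ⟨s', ⟨s, hs, rfl⟩, rfl⟩
    rw [SetLike.mem_coe, mem_colon_X]
    rw [memI]
    intro m hm
    refine ⟨s, hs, ?_⟩
    have hsupp : (X j * monomial (Finsupp.erase j s) (1:K)).support
        = {Finsupp.single j 1 + Finsupp.erase j s} := by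
      have : X j * monomial (Finsupp.erase j s) (1:K)
          = monomial (Finsupp.single j 1 + Finsupp.erase j s) (1:K) := by
        rw [X, monomial_mul, one_mul]
      rw [this, support_monomial, if_neg (one_ne_zero)]
    rw [hsupp, Finset.mem_singleton] at hm
    subst hm
    rw [Finsupp.le_def]
    intro v
    by_cases hv : v = j
    · rw [hv]
      have := hA1 s hs j
      simp only [Finsupp.add_apply, Finsupp.single_eq_same, Finsupp.erase_same]
      omega
    · simp only [Finsupp.add_apply, Finsupp.single_apply, if_neg (Ne.symm hv),
        Finsupp.erase_ne hv, zero_add]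
      exact le_rfl
  · intro f hf
    rw [mem_colon_X] at hf
    rw [memI] at hf
    rw [memI]
    intro m hm
    obtain ⟨s, hs, hle⟩ := hf _ (mem_support_X_mul j hm)
    refine ⟨Finsupp.erase j s, ⟨s, hs, rfl⟩, Finsupp.le_def.mpr fun v => ?_⟩
    have hv' := Finsupp.le_def.mp hle v
    by_cases hv : v = j
    · rw [hv, Finsupp.erase_same]; omega
    · rw [Finsupp.erase_ne hv]
      simpa [Finsupp.add_apply, Finsupp.single_apply, Ne.symm hv] using hv'

include hA1 in
lemma map_sig_eq_colon :
    Ideal.map (sig K j).toRingHom (Ideal.span ((fun s => monomial s (1 : K)) '' A))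
      = Submodule.colon (Ideal.span ((fun s => monomial s (1 : K)) '' A))
          ((Ideal.span {X j} : Ideal (MvPolynomial (Fin N) K)) : Set (MvPolynomial (Fin N) K)) := by
  rw [Ideal.map_span, ← span_erase_eq_colon j A hA1]
  congr 1
  rw [← Set.image_comp, ← Set.image_comp]
  refine Set.image_congr fun s _ => ?_
  exact sig_monomial j s 1

section Linear
open Matrix

variable {α β γ : Type*} [Fintype α] [Fintype β] [Fintype γ]
  [DecidableEq α] [DecidableEq β] [DecidableEq γ]

/-- entrywise application of `sig` to a linear map between free modules -/
def mapsig (j : Fin N) (f : (α → MvPolynomial (Fin N) K) →ₗ[MvPolynomial (Fin N) K]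
    (β → MvPolynomial (Fin N) K)) :
    (α → MvPolynomial (Fin N) K) →ₗ[MvPolynomial (Fin N) K] (β → MvPolynomial (Fin N) K) :=
  Matrix.toLin' ((LinearMap.toMatrix' f).map (sig K j))

lemma mapsig_comp (f : (β → MvPolynomial (Fin N) K) →ₗ[MvPolynomial (Fin N) K]
      (γ → MvPolynomial (Fin N) K))
    (g : (α → MvPolynomial (Fin N) K) →ₗ[MvPolynomial (Fin N) K]
      (β → MvPolynomial (Fin N) K)) :
    mapsig j (f ∘ₗ g) = mapsig j f ∘ₗ mapsig j g := by
  rw [mapsig, mapsig, mapsig, LinearMap.toMatrix'_comp]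
  rw [show ((LinearMap.toMatrix' f * LinearMap.toMatrix' g).map (sig K j))
      = (LinearMap.toMatrix' f).map (sig K j) * (LinearMap.toMatrix' g).map (sig K j) from
    Matrix.map_mul (f := (sig K j).toRingHom)]
  rw [Matrix.toLin'_mul]

lemma mapsig_zero : mapsig j (0 : (α → MvPolynomial (Fin N) K) →ₗ[MvPolynomial (Fin N) K]
    (β → MvPolynomial (Fin N) K)) = 0 := by
  rw [mapsig, map_zero]
  have : ((0 : Matrix β α (MvPolynomial (Fin N) K)).map (sig K j)) = 0 := by
    ext r c; simp
  rw [this, map_zero]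

lemma mapsig_apply_sig (f : (α → MvPolynomial (Fin N) K) →ₗ[MvPolynomial (Fin N) K]
    (β → MvPolynomial (Fin N) K)) (q : α → MvPolynomial (Fin N) K) :
    mapsig j f (fun r => sig K j (q r)) = fun r => sig K j (f q r) := by
  funext r
  rw [mapsig, Matrix.toLin'_apply]
  have h1 : f q = (LinearMap.toMatrix' f) *ᵥ q := by
    rw [← Matrix.toLin'_apply, Matrix.toLin'_toMatrix']
  rw [h1]
  exact (RingHom.map_mulVec (sig K j).toRingHom (LinearMap.toMatrix' f) q r).symm

lemma mapsig_entry_noX (f : (α → MvPolynomial (Fin N) K) →ₗ[MvPolynomial (Fin N) K]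
    (β → MvPolynomial (Fin N) K)) (r : β) (c : α) :
    NoX j (((LinearMap.toMatrix' f).map (sig K j)) r c) := by
  rw [Matrix.map_apply]
  exact noX_sig j _

lemma mapsig_apply (f : (α → MvPolynomial (Fin N) K) →ₗ[MvPolynomial (Fin N) K]
    (β → MvPolynomial (Fin N) K)) (v : α → MvPolynomial (Fin N) K) (r : β) :
    mapsig j f v r = ∑ c, ((LinearMap.toMatrix' f).map (sig K j)) r c * v c := by
  rw [mapsig, Matrix.toLin'_apply]
  rfl

end Linear

section Tors

lemma Xj_sub_one_ne_zero : (X j - 1 : MvPolynomial (Fin N) K) ≠ 0 := by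
  intro h
  have h1 : coeff (Finsupp.single j 1) (X j - 1 : MvPolynomial (Fin N) K) = 1 := by
    rw [coeff_sub, coeff_X_same, coeff_one,
      if_neg (fun h0 => by have h1 := Finsupp.ext_iff.mp h0 j; simp at h1)]
    ring
  rw [h, coeff_zero] at h1
  exact zero_ne_one h1

lemma pi_smul_eq_zero {α : Type*} {c : MvPolynomial (Fin N) K} (hc : c ≠ 0)
    {v : α → MvPolynomial (Fin N) K} (h : c • v = 0) : v = 0 := by
  funext r
  have := congrFun h r
  simp only [Pi.smul_apply, smul_eq_mul, Pi.zero_apply] at this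
  rcases mul_eq_zero.mp this with h' | h'
  · exact absurd h' hc
  · exact h'

lemma sig_single {α : Type*} [DecidableEq α] (c : α) :
    (fun r => sig K j ((Pi.single c (1 : MvPolynomial (Fin N) K) : α → MvPolynomial (Fin N) K) r))
      = (Pi.single c (1 : MvPolynomial (Fin N) K) : α → MvPolynomial (Fin N) K) := by
  funext r
  rw [Pi.single_apply, apply_ite (sig K j), map_one, map_zero]

end Tors

section GComplex
open Matrix

variable {α : Type*} [Fintype α] [DecidableEq α]

/-- a linear functional given by coefficients `g` -/
def piDot (g : α → MvPolynomial (Fin N) K) :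
    (α → MvPolynomial (Fin N) K) →ₗ[MvPolynomial (Fin N) K] MvPolynomial (Fin N) K where
  toFun f := ∑ r, f r * g r
  map_add' f1 f2 := by simp [add_mul, Finset.sum_add_distrib]
  map_smul' c f := by simp [Finset.mul_sum, mul_assoc]

lemma piDot_apply (g : α → MvPolynomial (Fin N) K) (f : α → MvPolynomial (Fin N) K) :
    piDot g f = ∑ r, f r * g r := rfl

variable {I : Ideal (MvPolynomial (Fin N) K)} {b : ℕ → ℕ}
  (F : MinFreeRes (MvPolynomial (Fin N) K) (maxIdeal K (Fin N)) I b)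

/-- images of the basis under the augmentation -/
def avec : Fin (b 0) → MvPolynomial (Fin N) K :=
  fun r => ((F.aug (Pi.single r 1)) : MvPolynomial (Fin N) K)

/-- the twisted augmentation of the specialized complex -/
def augG (j : Fin N) : (Fin (b 0) → MvPolynomial (Fin N) K) →ₗ[MvPolynomial (Fin N) K]
    MvPolynomial (Fin N) K :=
  piDot (fun r => sig K j (avec F r))

lemma aug_eq_sum (q : Fin (b 0) → MvPolynomial (Fin N) K) :
    ((F.aug q : MvPolynomial (Fin N) K)) = ∑ r, q r * avec F r := by
  have hq : q = ∑ i, q i • (Pi.single i 1 : Fin (b 0) → MvPolynomial (Fin N) K) := by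
    funext r
    rw [Finset.sum_apply]
    have hterm : ∀ i, (q i • (Pi.single i 1 : Fin (b 0) → MvPolynomial (Fin N) K)) r
        = if r = i then q i else 0 := by
      intro i
      rw [Pi.smul_apply, Pi.single_apply, smul_eq_mul]
      split <;> simp
    rw [Finset.sum_congr rfl (fun i _ => hterm i),
      Finset.sum_ite_eq Finset.univ r (fun i => q i), if_pos (Finset.mem_univ r)]
  conv_lhs => rw [hq]
  rw [map_sum]
  rw [AddSubmonoidClass.coe_finset_sum]
  refine Finset.sum_congr rfl fun i _ => ?_
  rw [_root_.map_smul, SetLike.val_smul, smul_eq_mul]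
  rfl

lemma augG_sig (q : Fin (b 0) → MvPolynomial (Fin N) K) :
    augG F j (fun r => sig K j (q r)) = sig K j ((F.aug q : MvPolynomial (Fin N) K)) := by
  rw [augG, piDot_apply, aug_eq_sum F q, map_sum]
  refine Finset.sum_congr rfl fun r _ => ?_
  rw [_root_.map_mul]

lemma dd_zero (i : ℕ) (x : Fin (b (i + 2)) → MvPolynomial (Fin N) K) :
    F.d i (F.d (i + 1) x) = 0 := by
  have : F.d (i+1) x ∈ LinearMap.range (F.d (i+1)) := ⟨x, rfl⟩
  rw [← F.exact i] at this
  exact this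

lemma aug_d_zero (x : Fin (b 1) → MvPolynomial (Fin N) K) : F.aug (F.d 0 x) = 0 := by
  have : F.d 0 x ∈ LinearMap.range (F.d 0) := ⟨x, rfl⟩
  rw [← F.exact_aug] at this
  exact this

lemma ee_zero (i : ℕ) (x : Fin (b (i + 2)) → MvPolynomial (Fin N) K) :
    mapsig j (F.d i) (mapsig j (F.d (i+1)) x) = 0 := by
  have h : F.d i ∘ₗ F.d (i+1) = 0 := LinearMap.ext fun y => dd_zero F i y
  calc mapsig j (F.d i) (mapsig j (F.d (i+1)) x)
      = mapsig j (F.d i ∘ₗ F.d (i+1)) x := by rw [mapsig_comp]; rfl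
    _ = 0 := by rw [h, mapsig_zero]; rfl

lemma augG_e0 (x : Fin (b 1) → MvPolynomial (Fin N) K) :
    augG F j (mapsig j (F.d 0) x) = 0 := by
  have h : (augG F j) ∘ₗ (mapsig j (F.d 0)) = 0 := by
    apply Module.Basis.ext (Pi.basisFun (MvPolynomial (Fin N) K) (Fin (b 1)))
    intro c
    rw [Pi.basisFun_apply]
    simp only [LinearMap.coe_comp, Function.comp_apply, LinearMap.zero_apply]
    have h1 : (Pi.single c (1 : MvPolynomial (Fin N) K) : Fin (b 1) → MvPolynomial (Fin N) K) =
        (fun r => sig K j ((Pi.single c (1 : MvPolynomial (Fin N) K) :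
          Fin (b 1) → MvPolynomial (Fin N) K) r)) :=
      (sig_single j c).symm
    rw [h1, mapsig_apply_sig, augG_sig]
    rw [show F.aug (F.d 0 (Pi.single c 1)) = 0 from aug_d_zero F _]
    simp
  exact congrFun (congrArg DFunLike.coe h) x

end GComplex

section Exactness
open Matrix

variable {I : Ideal (MvPolynomial (Fin N) K)} {b : ℕ → ℕ}
  (F : MinFreeRes (MvPolynomial (Fin N) K) (maxIdeal K (Fin N)) I b)

variable {α β : Type*} [Fintype α] [DecidableEq α] [Fintype β] [DecidableEq β]

lemma mapsig_ck (f : (α → MvPolynomial (Fin N) K) →ₗ[MvPolynomial (Fin N) K]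
    (β → MvPolynomial (Fin N) K)) (k : ℕ) (v : α → MvPolynomial (Fin N) K) :
    mapsig j f (fun r => ck j k (v r)) = fun r => ck j k (mapsig j f v r) := by
  funext r
  rw [mapsig_apply, mapsig_apply, ck_sum]
  refine Finset.sum_congr rfl fun c _ => ?_
  exact (ck_mul_noX j k (mapsig_entry_noX j f r c) (v c)).symm

lemma augG_ck (k : ℕ) (v : Fin (b 0) → MvPolynomial (Fin N) K) :
    augG F j (fun r => ck j k (v r)) = ck j k (augG F j v) := by
  rw [augG, piDot_apply, piDot_apply, ck_sum]
  refine Finset.sum_congr rfl fun c _ => ?_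
  rw [mul_comm, ← ck_mul_noX j k (noX_sig j (avec F c)) (v c), mul_comm]

/-- base case of exactness: vectors not involving `x_j` -/
lemma exactG_noX (i : ℕ) (v : Fin (b (i+1)) → MvPolynomial (Fin N) K)
    (hv : ∀ r, NoX j (v r)) (h : mapsig j (F.d i) v = 0) :
    ∃ w, mapsig j (F.d (i+1)) w = v := by
  classical
  have hsv : (fun r => sig K j (v r)) = v := by funext r; exact sig_eq_self_of_noX j (hv r)
  have h2 : (fun r => sig K j ((F.d i v) r)) = 0 := by
    rw [← mapsig_apply_sig, hsv, h]
  choose u hu using fun r =>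
    Ideal.mem_span_singleton'.mp (mem_span_of_sig_eq_zero j (congrFun h2 r))
  have hdv : F.d i v = ((X j - 1 : MvPolynomial (Fin N) K)) • u := by
    funext r
    rw [Pi.smul_apply, smul_eq_mul, mul_comm]
    exact (hu r).symm
  obtain ⟨w', hw'⟩ : ∃ w', F.d i w' = u := by
    cases i with
    | zero =>
        have h3 : F.aug (((X j - 1 : MvPolynomial (Fin N) K)) • u) = 0 := by rw [← hdv]; exact aug_d_zero F v
        rw [_root_.map_smul] at h3
        have h5 : (X j - 1) * ((F.aug u : ↥I) : MvPolynomial (Fin N) K) = 0 := by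
          have := congrArg Subtype.val h3
          simpa [SetLike.val_smul, smul_eq_mul] using this
        have h6 : F.aug u = 0 := by
          rcases mul_eq_zero.mp h5 with h' | h'
          · exact absurd h' (Xj_sub_one_ne_zero j)
          · exact Subtype.ext h'
        have : u ∈ LinearMap.ker F.aug := h6
        rw [F.exact_aug] at this
        exact this
    | succ i' =>
        have h3 : F.d i' (F.d (i'+1) v) = 0 := dd_zero F i' v
        rw [hdv, _root_.map_smul] at h3
        have h4 : F.d i' u = 0 := pi_smul_eq_zero (Xj_sub_one_ne_zero j) h3
        have : u ∈ LinearMap.ker (F.d i') := h4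
        rw [F.exact i'] at this
        exact this
  have h6 : F.d i (v - ((X j - 1 : MvPolynomial (Fin N) K)) • w') = 0 := by
    rw [map_sub, _root_.map_smul, hw', hdv, sub_self]
  have h7 : v - ((X j - 1 : MvPolynomial (Fin N) K)) • w' ∈ LinearMap.range (F.d (i+1)) := by
    rw [← F.exact i]
    exact h6
  obtain ⟨w2, hw2⟩ := h7
  refine ⟨fun r => sig K j (w2 r), ?_⟩
  rw [mapsig_apply_sig]
  funext r
  have h8 : F.d (i+1) w2 r = v r - (X j - 1) * w' r := by
    have := congrFun hw2 r
    simpa [Pi.sub_apply, Pi.smul_apply, smul_eq_mul] using this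
  rw [h8, map_sub, _root_.map_mul]
  have h9 : sig K j (X j - 1) = 0 := by
    rw [map_sub, sig_X_self, _root_.map_one, sub_self]
  rw [h9, zero_mul, sub_zero, sig_eq_self_of_noX j (hv r)]

/-- exactness of the specialized complex in the middle -/
lemma exactG_mid (i : ℕ) (n : ℕ) :
    ∀ (v : Fin (b (i+1)) → MvPolynomial (Fin N) K), (∀ r, degx j (v r) ≤ n) →
      mapsig j (F.d i) v = 0 → ∃ w, mapsig j (F.d (i+1)) w = v := by
  induction n with
  | zero =>
      intro v hdeg h
      refine exactG_noX j F i v (fun r m hm => ?_) h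
      have h1 := le_degx j hm
      have h2 := hdeg r
      omega
  | succ n ih =>
      intro v hdeg h
      set vt := fun r => ck j (n+1) (v r) with hvtdef
      have hvt0 : mapsig j (F.d i) vt = 0 := by
        have hck := mapsig_ck j (F.d i) (n+1) v
        rw [h] at hck
        rw [hvtdef, hck]
        funext r
        exact ck_zero j (n+1)
      have hpow : vt = (X j ^ (n+1) : MvPolynomial (Fin N) K) • (fun r => sig K j (vt r)) := by
        funext r
        rw [Pi.smul_apply, smul_eq_mul]
        exact ck_eq_X_pow_mul_sig j (n+1) (v r)
      have hsig0 : mapsig j (F.d i) (fun r => sig K j (vt r)) = 0 := by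
        have h1 : (X j ^ (n+1) : MvPolynomial (Fin N) K) •
            mapsig j (F.d i) (fun r => sig K j (vt r)) = 0 := by
          rw [← _root_.map_smul, ← hpow, hvt0]
        exact pi_smul_eq_zero (pow_ne_zero _ (X_ne_zero j)) h1
      obtain ⟨w1, hw1⟩ := exactG_noX j F i (fun r => sig K j (vt r))
        (fun r => noX_sig j (vt r)) hsig0
      set vr := v - vt with hvrdef
      have hdeg' : ∀ r, degx j (vr r) ≤ n := by
        intro r
        refine Finset.sup_le fun m hm => ?_
        rw [mem_support_iff, hvrdef, Pi.sub_apply, coeff_sub, hvtdef, coeff_ck] at hm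
        by_cases hmj : m j = n + 1
        · rw [if_pos hmj, sub_self] at hm
          exact absurd rfl hm
        · rw [if_neg hmj, sub_zero] at hm
          have := le_degx j (mem_support_iff.mpr hm)
          have := hdeg r
          omega
      have hvr0 : mapsig j (F.d i) vr = 0 := by
        rw [hvrdef, map_sub, h, hvt0, sub_zero]
      obtain ⟨w2, hw2⟩ := ih vr hdeg' hvr0
      refine ⟨(X j ^ (n+1) : MvPolynomial (Fin N) K) • w1 + w2, ?_⟩
      rw [map_add, _root_.map_smul, hw1, hw2, ← hpow, hvrdef]
      abel

end Exactness

section ExactAug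
open Matrix

variable {I : Ideal (MvPolynomial (Fin N) K)} {b : ℕ → ℕ}
  (F : MinFreeRes (MvPolynomial (Fin N) K) (maxIdeal K (Fin N)) I b)
  (hI : I = Ideal.span ((fun s => monomial s (1 : K)) '' A))

include hA1 hI in
/-- base case of exactness at the augmentation spot -/
lemma exactG_aug_noX (v : Fin (b 0) → MvPolynomial (Fin N) K)
    (hv : ∀ r, NoX j (v r)) (h : augG F j v = 0) :
    ∃ w, mapsig j (F.d 0) w = v := by
  classical
  have hsv : (fun r => sig K j (v r)) = v := by funext r; exact sig_eq_self_of_noX j (hv r)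
  have h2 : sig K j ((F.aug v : MvPolynomial (Fin N) K)) = 0 := by
    rw [← augG_sig, hsv, h]
  obtain ⟨c, hc⟩ := Ideal.mem_span_singleton'.mp (mem_span_of_sig_eq_zero j h2)
  -- hc : c * (X j - 1) = ↑(F.aug v)
  have hcI : c ∈ I := by
    rw [hI]
    refine nzd j A hA1 ?_
    rw [mul_comm, hc, ← hI]
    exact (F.aug v).2
  obtain ⟨g, hg⟩ := F.aug_surj ⟨c, hcI⟩
  have h3 : F.aug (v - ((X j - 1 : MvPolynomial (Fin N) K)) • g) = 0 := by
    rw [map_sub, _root_.map_smul, hg]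
    apply Subtype.ext
    push_cast [SetLike.val_smul, smul_eq_mul]
    rw [← hc]
    ring
  have h4 : v - ((X j - 1 : MvPolynomial (Fin N) K)) • g ∈ LinearMap.range (F.d 0) := by
    rw [← F.exact_aug]
    exact h3
  obtain ⟨w2, hw2⟩ := h4
  refine ⟨fun r => sig K j (w2 r), ?_⟩
  rw [mapsig_apply_sig]
  funext r
  have h8 : F.d 0 w2 r = v r - (X j - 1) * g r := by
    have := congrFun hw2 r
    simpa [Pi.sub_apply, Pi.smul_apply, smul_eq_mul] using this
  rw [h8, map_sub, _root_.map_mul]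
  have h9 : sig K j (X j - 1) = 0 := by
    rw [map_sub, sig_X_self, _root_.map_one, sub_self]
  rw [h9, zero_mul, sub_zero, sig_eq_self_of_noX j (hv r)]

include hA1 hI in
/-- exactness of the specialized complex at the augmentation -/
lemma exactG_aug (n : ℕ) :
    ∀ (v : Fin (b 0) → MvPolynomial (Fin N) K), (∀ r, degx j (v r) ≤ n) →
      augG F j v = 0 → ∃ w, mapsig j (F.d 0) w = v := by
  induction n with
  | zero =>
      intro v hdeg h
      refine exactG_aug_noX (j := j) (A := A) (hA1 := hA1) (F := F) (hI := hI) v (fun r m hm => ?_) h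
      have h1 := le_degx j hm
      have h2 := hdeg r
      omega
  | succ n ih =>
      intro v hdeg h
      set vt := fun r => ck j (n+1) (v r) with hvtdef
      have hvt0 : augG F j vt = 0 := by
        rw [hvtdef, augG_ck j F (n+1) v, h, ck_zero]
      have hpow : vt = (X j ^ (n+1) : MvPolynomial (Fin N) K) • (fun r => sig K j (vt r)) := by
        funext r
        rw [Pi.smul_apply, smul_eq_mul]
        exact ck_eq_X_pow_mul_sig j (n+1) (v r)
      have hsig0 : augG F j (fun r => sig K j (vt r)) = 0 := by
        have h1 : (X j ^ (n+1) : MvPolynomial (Fin N) K) *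
            augG F j (fun r => sig K j (vt r)) = 0 := by
          rw [show (X j ^ (n+1) : MvPolynomial (Fin N) K) * augG F j (fun r => sig K j (vt r))
              = augG F j ((X j ^ (n+1) : MvPolynomial (Fin N) K) • (fun r => sig K j (vt r)))
            from (by rw [_root_.map_smul, smul_eq_mul]), ← hpow, hvt0]
        rcases mul_eq_zero.mp h1 with h' | h'
        · exact absurd h' (pow_ne_zero _ (X_ne_zero j))
        · exact h'
      obtain ⟨w1, hw1⟩ := exactG_aug_noX (j := j) (A := A) (hA1 := hA1) (F := F) (hI := hI) (fun r => sig K j (vt r))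
        (fun r => noX_sig j (vt r)) hsig0
      set vr := v - vt with hvrdef
      have hdeg' : ∀ r, degx j (vr r) ≤ n := by
        intro r
        refine Finset.sup_le fun m hm => ?_
        rw [mem_support_iff, hvrdef, Pi.sub_apply, coeff_sub, hvtdef, coeff_ck] at hm
        by_cases hmj : m j = n + 1
        · rw [if_pos hmj, sub_self] at hm
          exact absurd rfl hm
        · rw [if_neg hmj, sub_zero] at hm
          have h1 := le_degx j (mem_support_iff.mpr hm)
          have h2 := hdeg r
          omega
      have hvr0 : augG F j vr = 0 := by
        rw [hvrdef, map_sub, h, hvt0, sub_zero]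
      obtain ⟨w2, hw2⟩ := ih vr hdeg' hvr0
      refine ⟨(X j ^ (n+1) : MvPolynomial (Fin N) K) • w1 + w2, ?_⟩
      rw [map_add, _root_.map_smul, hw1, hw2, ← hpow, hvrdef]
      abel

include hA1 hI in
/-- the image of the twisted augmentation is the colon ideal -/
lemma range_augG :
    LinearMap.range (augG F j) = Submodule.colon I ((Ideal.span {X j} : Ideal (MvPolynomial (Fin N) K)) : Set (MvPolynomial (Fin N) K)) := by
  subst hI
  apply le_antisymm
  · rw [← map_sig_eq_colon j A hA1]
    rintro p ⟨f, rfl⟩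
    rw [augG, piDot_apply]
    refine Ideal.sum_mem _ fun r _ => Ideal.mul_mem_left _ _ ?_
    exact Ideal.mem_map_of_mem _ (F.aug (Pi.single r 1)).2
  · rw [← map_sig_eq_colon j A hA1]
    rw [show Ideal.map (sig K j).toRingHom (Ideal.span ((fun s => monomial s (1 : K)) '' A))
          ≤ LinearMap.range (augG F j) ↔
        Ideal.span ((fun s => monomial s (1 : K)) '' A)
          ≤ Ideal.comap (sig K j).toRingHom (LinearMap.range (augG F j)) from
      Ideal.map_le_iff_le_comap]
    intro p hp
    obtain ⟨q, hq⟩ := F.aug_surj ⟨p, hp⟩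
    refine ⟨(fun r => sig K j (q r)), ?_⟩
    rw [augG_sig, hq]
    rfl

end ExactAug

section Lifting

variable {T : Type*} [CommRing T] {M : Type*} [AddCommGroup M] [Module T M]

/-- lifting a map of complexes of free modules through a resolution -/
lemma lift_chain {a c : ℕ → ℕ}
    (dX : ∀ i : ℕ, (Fin (a (i+1)) → T) →ₗ[T] (Fin (a i) → T))
    (augX : (Fin (a 0) → T) →ₗ[T] M)
    (hX0 : ∀ x, augX (dX 0 x) = 0)
    (hXc : ∀ i x, dX i (dX (i+1) x) = 0)
    (dY : ∀ i : ℕ, (Fin (c (i+1)) → T) →ₗ[T] (Fin (c i) → T))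
    (augY : (Fin (c 0) → T) →ₗ[T] M)
    (hsurj : Function.Surjective augY)
    (hY0 : ∀ y, augY y = 0 → ∃ z, dY 0 z = y)
    (hY : ∀ i y, dY i y = 0 → ∃ z, dY (i+1) z = y) :
    ∃ u : ∀ i : ℕ, (Fin (a i) → T) →ₗ[T] (Fin (c i) → T),
      (∀ x, augY (u 0 x) = augX x) ∧ ∀ i x, dY i (u (i+1) x) = u i (dX i x) := by
  classical
  -- the zeroth map
  choose y0 hy0 using fun r : Fin (a 0) => hsurj (augX (Pi.single r 1))
  set u0 : (Fin (a 0) → T) →ₗ[T] (Fin (c 0) → T) :=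
    (Pi.basisFun T (Fin (a 0))).constr T y0 with hu0def
  have hu0 : augY.comp u0 = augX := by
    apply Module.Basis.ext (Pi.basisFun T (Fin (a 0)))
    intro r
    rw [LinearMap.comp_apply, hu0def, Module.Basis.constr_basis, Pi.basisFun_apply, hy0]
  -- the first map
  choose z1 hz1 using fun r : Fin (a 1) => hY0 (u0 (dX 0 (Pi.single r 1)))
    (by rw [← LinearMap.comp_apply, hu0]; exact hX0 _)
  set u1 : (Fin (a 1) → T) →ₗ[T] (Fin (c 1) → T) :=
    (Pi.basisFun T (Fin (a 1))).constr T z1 with hu1def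
  have hu1 : (dY 0).comp u1 = u0.comp (dX 0) := by
    apply Module.Basis.ext (Pi.basisFun T (Fin (a 1)))
    intro r
    rw [LinearMap.comp_apply, hu1def, Module.Basis.constr_basis, Pi.basisFun_apply, hz1,
      LinearMap.comp_apply]
  -- the recursive step
  have step : ∀ (i : ℕ)
      (fg : ((Fin (a i) → T) →ₗ[T] (Fin (c i) → T)) ×
        ((Fin (a (i+1)) → T) →ₗ[T] (Fin (c (i+1)) → T))),
      ((dY i).comp fg.2 = fg.1.comp (dX i)) →
      {g' : (Fin (a (i+2)) → T) →ₗ[T] (Fin (c (i+2)) → T) //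
        (dY (i+1)).comp g' = fg.2.comp (dX (i+1))} := by
    intro i fg hfg
    choose z hz using fun r : Fin (a (i+2)) => hY i (fg.2 (dX (i+1) (Pi.single r 1)))
      (by
        rw [← LinearMap.comp_apply, hfg, LinearMap.comp_apply, hXc, map_zero])
    refine ⟨(Pi.basisFun T (Fin (a (i+2)))).constr T z, ?_⟩
    apply Module.Basis.ext (Pi.basisFun T (Fin (a (i+2))))
    intro r
    rw [LinearMap.comp_apply, Module.Basis.constr_basis, Pi.basisFun_apply, hz,
      LinearMap.comp_apply]
  -- assemble by recursion
  let st : ∀ i : ℕ, {fg : ((Fin (a i) → T) →ₗ[T] (Fin (c i) → T)) ×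
      ((Fin (a (i+1)) → T) →ₗ[T] (Fin (c (i+1)) → T)) //
      (dY i).comp fg.2 = fg.1.comp (dX i)} :=
    fun i => Nat.rec ⟨(u0, u1), hu1⟩
      (fun i prev => ⟨(prev.1.2, (step i prev.1 prev.2).1), (step i prev.1 prev.2).2⟩) i
  refine ⟨fun i => (st i).1.1, ?_, ?_⟩
  · intro x
    exact LinearMap.congr_fun hu0 x
  · intro i x
    have hcoh : (st (i+1)).1.1 = (st i).1.2 := rfl
    have := LinearMap.congr_fun (st i).2 x
    rw [LinearMap.comp_apply, LinearMap.comp_apply] at this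
    beta_reduce
    rw [hcoh]
    exact this

/-- null-homotopy of a chain self-map vanishing on the augmentation -/
lemma homotopy_chain {c : ℕ → ℕ}
    (dY : ∀ i : ℕ, (Fin (c (i+1)) → T) →ₗ[T] (Fin (c i) → T))
    (augY : (Fin (c 0) → T) →ₗ[T] M)
    (hYc : ∀ i x, dY i (dY (i+1) x) = 0)
    (hY0 : ∀ y, augY y = 0 → ∃ z, dY 0 z = y)
    (hY : ∀ i y, dY i y = 0 → ∃ z, dY (i+1) z = y)
    (φ : ∀ i : ℕ, (Fin (c i) → T) →ₗ[T] (Fin (c i) → T))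
    (hφ0 : ∀ x, augY (φ 0 x) = 0)
    (hφc : ∀ i x, dY i (φ (i+1) x) = φ i (dY i x)) :
    ∃ h : ∀ i : ℕ, (Fin (c i) → T) →ₗ[T] (Fin (c (i+1)) → T),
      (∀ x, φ 0 x = dY 0 (h 0 x)) ∧
      ∀ i x, φ (i+1) x = dY (i+1) (h (i+1) x) + h i (dY i x) := by
  classical
  choose z0 hz0 using fun r : Fin (c 0) => hY0 (φ 0 (Pi.single r 1)) (hφ0 _)
  set h0 : (Fin (c 0) → T) →ₗ[T] (Fin (c 1) → T) :=
    (Pi.basisFun T (Fin (c 0))).constr T z0 with h0def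
  have hh0 : (dY 0).comp h0 = φ 0 := by
    apply Module.Basis.ext (Pi.basisFun T (Fin (c 0)))
    intro r
    rw [LinearMap.comp_apply, h0def, Module.Basis.constr_basis, Pi.basisFun_apply, hz0]
  -- step: given h_i, h_{i+1} with invariant, build h_{i+2}
  have step : ∀ (i : ℕ)
      (hh : ((Fin (c i) → T) →ₗ[T] (Fin (c (i+1)) → T)) ×
        ((Fin (c (i+1)) → T) →ₗ[T] (Fin (c (i+2)) → T))),
      (φ (i+1) = (dY (i+1)).comp hh.2 + hh.1.comp (dY i)) →
      {g' : (Fin (c (i+2)) → T) →ₗ[T] (Fin (c (i+3)) → T) //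
        φ (i+2) = (dY (i+2)).comp g' + hh.2.comp (dY (i+1))} := by
    intro i hh hinv
    choose z hz using fun r : Fin (c (i+2)) =>
      hY (i+1) (φ (i+2) (Pi.single r 1) - hh.2 (dY (i+1) (Pi.single r 1)))
      (by
        rw [map_sub, hφc (i+1) (Pi.single r 1)]
        have := LinearMap.congr_fun hinv (dY (i+1) (Pi.single r 1))
        rw [LinearMap.add_apply, LinearMap.comp_apply, LinearMap.comp_apply, hYc,
          map_zero, add_zero] at this
        rw [this, sub_self])
    refine ⟨(Pi.basisFun T (Fin (c (i+2)))).constr T z, ?_⟩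
    apply Module.Basis.ext (Pi.basisFun T (Fin (c (i+2))))
    intro r
    rw [LinearMap.add_apply, LinearMap.comp_apply, Module.Basis.constr_basis,
      Pi.basisFun_apply, hz, LinearMap.comp_apply]
    abel
  -- the base pair: h0 and h1
  have base : {g' : (Fin (c 1) → T) →ₗ[T] (Fin (c 2) → T) //
      φ 1 = (dY 1).comp g' + h0.comp (dY 0)} := by
    choose z hz using fun r : Fin (c 1) =>
      hY 0 (φ 1 (Pi.single r 1) - h0 (dY 0 (Pi.single r 1)))
      (by
        rw [map_sub, hφc 0 (Pi.single r 1)]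
        have := LinearMap.congr_fun hh0 (dY 0 (Pi.single r 1))
        rw [LinearMap.comp_apply] at this
        rw [← this, sub_self])
    refine ⟨(Pi.basisFun T (Fin (c 1))).constr T z, ?_⟩
    apply Module.Basis.ext (Pi.basisFun T (Fin (c 1)))
    intro r
    rw [LinearMap.add_apply, LinearMap.comp_apply, Module.Basis.constr_basis,
      Pi.basisFun_apply, hz, LinearMap.comp_apply]
    abel
  let st : ∀ i : ℕ, {hh : ((Fin (c i) → T) →ₗ[T] (Fin (c (i+1)) → T)) ×
      ((Fin (c (i+1)) → T) →ₗ[T] (Fin (c (i+2)) → T)) //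
      φ (i+1) = (dY (i+1)).comp hh.2 + hh.1.comp (dY i)} :=
    fun i => Nat.rec ⟨(h0, base.1), base.2⟩
      (fun i prev => ⟨(prev.1.2, (step i prev.1 prev.2).1), (step i prev.1 prev.2).2⟩) i
  refine ⟨fun i => (st i).1.1, ?_, ?_⟩
  · intro x
    exact (LinearMap.congr_fun hh0 x).symm
  · intro i x
    have hcoh : (st (i+1)).1.1 = (st i).1.2 := rfl
    have := LinearMap.congr_fun (st i).2 x
    rw [LinearMap.add_apply, LinearMap.comp_apply, LinearMap.comp_apply] at this
    beta_reduce
    rw [hcoh]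
    exact this

end Lifting

section Bar
open Matrix

lemma cc_of_mem_maxIdeal {p : MvPolynomial (Fin N) K} (hp : p ∈ maxIdeal K (Fin N)) :
    constantCoeff p = 0 := by
  rw [maxIdeal] at hp
  refine Submodule.span_induction ?_ ?_ ?_ ?_ hp
  · rintro x ⟨v, rfl⟩
    simp
  · exact map_zero _
  · intro x y _ _ hx hy
    rw [map_add, hx, hy, add_zero]
  · intro a x _ hx
    rw [smul_eq_mul, _root_.map_mul, hx, mul_zero]

lemma mem_maxIdeal_pi {α : Type*} {z : α → MvPolynomial (Fin N) K}
    (hz : z ∈ (maxIdeal K (Fin N)) •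
      (⊤ : Submodule (MvPolynomial (Fin N) K) (α → MvPolynomial (Fin N) K))) (r : α) :
    z r ∈ maxIdeal K (Fin N) := by
  refine Submodule.smul_induction_on hz ?_ ?_
  · intro c hc t _
    rw [Pi.smul_apply, smul_eq_mul]
    exact Ideal.mul_mem_right _ _ hc
  · intro x y hx hy
    rw [Pi.add_apply]
    exact add_mem hx hy

variable {α β γ : Type*} [Fintype α] [DecidableEq α] [Fintype β] [DecidableEq β]
  [Fintype γ] [DecidableEq γ]

/-- reduction of a map of free modules modulo the maximal ideal -/
def bar (f : (α → MvPolynomial (Fin N) K) →ₗ[MvPolynomial (Fin N) K]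
    (β → MvPolynomial (Fin N) K)) : (α → K) →ₗ[K] (β → K) :=
  Matrix.toLin' ((LinearMap.toMatrix' f).map
    (constantCoeff : MvPolynomial (Fin N) K →+* K))

lemma bar_comp (f : (β → MvPolynomial (Fin N) K) →ₗ[MvPolynomial (Fin N) K]
      (γ → MvPolynomial (Fin N) K))
    (g : (α → MvPolynomial (Fin N) K) →ₗ[MvPolynomial (Fin N) K]
      (β → MvPolynomial (Fin N) K)) :
    bar (f ∘ₗ g) = bar f ∘ₗ bar g := by
  rw [bar, bar, bar, LinearMap.toMatrix'_comp]
  rw [show ((LinearMap.toMatrix' f * LinearMap.toMatrix' g).map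
      (constantCoeff : MvPolynomial (Fin N) K →+* K))
      = (LinearMap.toMatrix' f).map constantCoeff * (LinearMap.toMatrix' g).map constantCoeff from
    Matrix.map_mul]
  rw [Matrix.toLin'_mul]

lemma bar_id : bar (LinearMap.id : (α → MvPolynomial (Fin N) K) →ₗ[MvPolynomial (Fin N) K]
    (α → MvPolynomial (Fin N) K)) = LinearMap.id := by
  rw [bar, LinearMap.toMatrix'_id]
  rw [Matrix.map_one _ (map_zero _) (map_one _)]
  exact Matrix.toLin'_one

lemma bar_sub (f g : (α → MvPolynomial (Fin N) K) →ₗ[MvPolynomial (Fin N) K]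
    (β → MvPolynomial (Fin N) K)) : bar (f - g) = bar f - bar g := by
  rw [bar, bar, bar, map_sub]
  rw [show ((LinearMap.toMatrix' f - LinearMap.toMatrix' g).map
      (constantCoeff : MvPolynomial (Fin N) K →+* K))
      = (LinearMap.toMatrix' f).map constantCoeff
        - (LinearMap.toMatrix' g).map constantCoeff from ?_]
  · rw [map_sub]
  · ext r c
    simp [Matrix.map_apply, Matrix.sub_apply]

lemma bar_eq_zero {f : (α → MvPolynomial (Fin N) K) →ₗ[MvPolynomial (Fin N) K]
    (β → MvPolynomial (Fin N) K)}
    (hf : LinearMap.range f ≤ (maxIdeal K (Fin N)) •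
      (⊤ : Submodule (MvPolynomial (Fin N) K) (β → MvPolynomial (Fin N) K))) :
    bar f = 0 := by
  have hmat : (LinearMap.toMatrix' f).map
      (constantCoeff : MvPolynomial (Fin N) K →+* K) = 0 := by
    ext r c
    rw [Matrix.map_apply, LinearMap.toMatrix'_apply, Matrix.zero_apply]
    exact cc_of_mem_maxIdeal (mem_maxIdeal_pi (hf ⟨_, rfl⟩) r)
  rw [bar, hmat, map_zero]

lemma card_le_of_left_inverse {n m : ℕ} (f : (Fin n → K) →ₗ[K] (Fin m → K))
    (g : (Fin m → K) →ₗ[K] (Fin n → K)) (h : ∀ x, g (f x) = x) : n ≤ m := by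
  have hinj : Function.Injective f := Function.LeftInverse.injective h
  have := LinearMap.finrank_le_finrank_of_injective hinj
  rwa [Module.finrank_pi, Module.finrank_pi, Fintype.card_fin, Fintype.card_fin] at this

end Bar

end Stmt8Aux
end StmtAux

/-- for a squarefree monomial ideal `I` and a variable `x = X j`,
`β_i(I) ≥ β_i(I : x)` for all `i`. -/
theorem stmt8 (K : Type*) [Field K] {N : ℕ} (I : Ideal (MvPolynomial (Fin N) K))
    (hsf : IsSqfreeMonomialIdeal I) (j : Fin N) (b b' : ℕ → ℕ)
    (F : MinFreeRes (MvPolynomial (Fin N) K) (maxIdeal K (Fin N)) I b)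
    (F' : MinFreeRes (MvPolynomial (Fin N) K) (maxIdeal K (Fin N))
      (Submodule.colon I ((Ideal.span {X j} : Ideal (MvPolynomial (Fin N) K)) : Set (MvPolynomial (Fin N) K))) b')
    (i : ℕ) : b' i ≤ b i := by
  classical
  obtain ⟨A, hA1, hI⟩ := hsf
  -- the specialized complex `G` with differentials `e` and augmentation `augY`
  have hrange : ∀ x, Stmt8Aux.augG F j x ∈ Submodule.colon I ((Ideal.span {X j} : Ideal (MvPolynomial (Fin N) K)) : Set (MvPolynomial (Fin N) K)) := by
    intro x
    rw [← Stmt8Aux.range_augG (j := j) (A := A) (hA1 := hA1) (F := F) (hI := hI)]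
    exact ⟨x, rfl⟩
  set augY : (Fin (b 0) → MvPolynomial (Fin N) K) →ₗ[MvPolynomial (Fin N) K]
      ↥(Submodule.colon I ((Ideal.span {X j} : Ideal (MvPolynomial (Fin N) K)) : Set (MvPolynomial (Fin N) K))) :=
    (Stmt8Aux.augG F j).codRestrict _ hrange with haugY
  have hYmid : ∀ (k : ℕ) (y : Fin (b (k+1)) → MvPolynomial (Fin N) K),
      Stmt8Aux.mapsig j (F.d k) y = 0 → ∃ z, Stmt8Aux.mapsig j (F.d (k+1)) z = y := by
    intro k y hy
    exact Stmt8Aux.exactG_mid j F k (Finset.univ.sup fun r => Stmt8Aux.degx j (y r)) y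
      (fun r => Finset.le_sup (f := fun r => Stmt8Aux.degx j (y r)) (Finset.mem_univ r)) hy
  have hYaug : ∀ y : Fin (b 0) → MvPolynomial (Fin N) K,
      augY y = 0 → ∃ z, Stmt8Aux.mapsig j (F.d 0) z = y := by
    intro y hy
    have h0 : Stmt8Aux.augG F j y = 0 := congrArg Subtype.val hy
    exact Stmt8Aux.exactG_aug (j := j) (A := A) (hA1 := hA1) (F := F) (hI := hI)
      (Finset.univ.sup fun r => Stmt8Aux.degx j (y r)) y
      (fun r => Finset.le_sup (f := fun r => Stmt8Aux.degx j (y r)) (Finset.mem_univ r)) h0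
  have hsurjY : Function.Surjective augY := by
    intro m
    have hm : (m : MvPolynomial (Fin N) K) ∈ LinearMap.range (Stmt8Aux.augG F j) := by
      rw [Stmt8Aux.range_augG (j := j) (A := A) (hA1 := hA1) (F := F) (hI := hI)]
      exact m.2
    obtain ⟨x, hx⟩ := hm
    exact ⟨x, Subtype.ext hx⟩
  -- lift the identity through the two resolutions
  obtain ⟨u, hu0, huc⟩ := Stmt8Aux.lift_chain F'.d F'.aug
    (fun x => Stmt8Aux.aug_d_zero F' x) (fun k x => Stmt8Aux.dd_zero F' k x)
    (fun k => Stmt8Aux.mapsig j (F.d k)) augY hsurjY hYaug hYmid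
  obtain ⟨v, hv0, hvc⟩ := Stmt8Aux.lift_chain
    (fun k => Stmt8Aux.mapsig j (F.d k)) augY
    (fun x => Subtype.ext (Stmt8Aux.augG_e0 (F := F) (j := j) x))
    (fun k x => Stmt8Aux.ee_zero (j := j) (F := F) k x)
    F'.d F'.aug F'.aug_surj
    (fun y hy => by
      have : y ∈ LinearMap.ker F'.aug := hy
      rw [F'.exact_aug] at this
      exact this)
    (fun k y hy => by
      have : y ∈ LinearMap.ker (F'.d k) := hy
      rw [F'.exact k] at this
      exact this)
  -- the difference of the composite with the identity is null-homotopic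
  set φ : ∀ k : ℕ, (Fin (b' k) → MvPolynomial (Fin N) K) →ₗ[MvPolynomial (Fin N) K]
      (Fin (b' k) → MvPolynomial (Fin N) K) :=
    fun k => (v k ∘ₗ u k) - LinearMap.id with hφdef
  obtain ⟨h, hh0, hhc⟩ := Stmt8Aux.homotopy_chain F'.d F'.aug
    (fun k x => Stmt8Aux.dd_zero F' k x)
    (fun y hy => by
      have : y ∈ LinearMap.ker F'.aug := hy
      rw [F'.exact_aug] at this
      exact this)
    (fun k y hy => by
      have : y ∈ LinearMap.ker (F'.d k) := hy
      rw [F'.exact k] at this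
      exact this)
    φ
    (fun x => by
      rw [hφdef]
      simp only [LinearMap.sub_apply, LinearMap.comp_apply, LinearMap.id_apply, map_sub]
      rw [hv0, hu0, sub_self])
    (fun k x => by
      rw [hφdef]
      simp only [LinearMap.sub_apply, LinearMap.comp_apply, LinearMap.id_apply, map_sub]
      rw [hvc, huc])
  -- minimality: the homotopy forces `φ` to land in `mx • ⊤`
  have hsmul_map : ∀ {n m : ℕ}
      (f : (Fin n → MvPolynomial (Fin N) K) →ₗ[MvPolynomial (Fin N) K]
        (Fin m → MvPolynomial (Fin N) K))
      (z : Fin n → MvPolynomial (Fin N) K),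
      z ∈ (maxIdeal K (Fin N)) • (⊤ : Submodule (MvPolynomial (Fin N) K)
        (Fin n → MvPolynomial (Fin N) K)) →
      f z ∈ (maxIdeal K (Fin N)) • (⊤ : Submodule (MvPolynomial (Fin N) K)
        (Fin m → MvPolynomial (Fin N) K)) := by
    intro n m f z hz
    have h1 : f z ∈ Submodule.map f ((maxIdeal K (Fin N)) • ⊤) :=
      Submodule.mem_map_of_mem hz
    rw [Submodule.map_smul''] at h1
    exact SetLike.le_def.mp (smul_mono_right _ le_top) h1
  have hφrange : ∀ k, LinearMap.range (φ k) ≤ (maxIdeal K (Fin N)) •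
      (⊤ : Submodule (MvPolynomial (Fin N) K) (Fin (b' k) → MvPolynomial (Fin N) K)) := by
    intro k
    rintro _ ⟨x, rfl⟩
    cases k with
    | zero =>
        rw [hh0 x]
        exact F'.minimal 0 ⟨h 0 x, rfl⟩
    | succ k =>
        rw [hhc k x]
        refine Submodule.add_mem _ (F'.minimal (k+1) ⟨h (k+1) x, rfl⟩) ?_
        exact hsmul_map (h k) _ (F'.minimal k ⟨x, rfl⟩)
  -- reduce modulo the maximal ideal and compare ranks
  have hbarφ : Stmt8Aux.bar (φ i) = 0 := Stmt8Aux.bar_eq_zero (hφrange i)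
  have hbarvu : Stmt8Aux.bar (v i ∘ₗ u i) = LinearMap.id := by
    have h1 := Stmt8Aux.bar_sub (v i ∘ₗ u i) LinearMap.id
    have h2 : (v i ∘ₗ u i) - LinearMap.id = φ i := rfl
    rw [h2, hbarφ] at h1
    have h3 := sub_eq_zero.mp h1.symm
    rw [h3]
    exact Stmt8Aux.bar_id
  refine Stmt8Aux.card_le_of_left_inverse (Stmt8Aux.bar (u i)) (Stmt8Aux.bar (v i)) ?_
  intro x
  have h4 := Stmt8Aux.bar_comp (v i) (u i)
  rw [hbarvu] at h4
  have := LinearMap.congr_fun h4.symm x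
  rw [LinearMap.comp_apply] at this
  rw [this]
  rfl
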